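/- arXiv:1405.5379 — 17 statements merged into one kernel-verified Lean document; each statement's English description precedes it below -/
import Mathlib

section
/- Let y : ℕ → ℝ be a sequence with y_n > 0 for all n. Then y satisfies the Somos-4 Y-system y_{n+4} · y_n = (1 + y_{n+3})(1 + y_{n+1}) / (1 + y_{n+2}^{-1})^2 for all n ∈ ℕ if and only if there exist constants β > 0 and 𝔮 > 0 such that y_{n+2} · y_n = β · 𝔮^n · (1 + y_{n+1}) / y_{n+1}^2 for all n ∈ ℕ (a q-difference analogue of the first Painlevé equation). -/
/-- The Somos-4 Y-system is equivalent to a q-Painlevé I equation: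
a positive sequence satisfies the fourth-order Y-system iff it satisfies the
second-order non-autonomous recurrence `y_{n+2} y_n = β 𝔮^n (1+y_{n+1})/y_{n+1}^2`
for some positive constants `β`, `𝔮`. -/
theorem somos4_Ysystem_iff_qPainleveI (y : ℕ → ℝ) (hy : ∀ n, 0 < y n) :
    (∀ n : ℕ, y (n + 4) * y n =
      (1 + y (n + 3)) * (1 + y (n + 1)) / (1 + (y (n + 2))⁻¹) ^ 2) ↔
    (∃ β 𝔮 : ℝ, 0 < β ∧ 0 < 𝔮 ∧
      ∀ n : ℕ, y (n + 2) * y n = β * 𝔮 ^ n * (1 + y (n + 1)) / (y (n + 1)) ^ 2) := by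
  have hz : ∀ n, y n ≠ 0 := fun n => (hy n).ne'
  have h1 : ∀ n, (1 : ℝ) + y n ≠ 0 := fun n => by nlinarith [hy n]
  set f : ℕ → ℝ := fun n => y (n+2) * y n * (y (n+1))^2 / (1 + y (n+1)) with hf
  have hfpos : ∀ n, 0 < f n := by
    intro n
    have := hy n; have := hy (n+1); have := hy (n+2)
    simp only [hf]
    positivity
  -- canonical polynomial form E n
  have keyY : ∀ n : ℕ, (y (n + 4) * y n =
      (1 + y (n + 3)) * (1 + y (n + 1)) / (1 + (y (n + 2))⁻¹) ^ 2) ↔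
      y n * y (n+4) * (1 + y (n+2))^2 =
        (y (n+2))^2 * (1 + y (n+1)) * (1 + y (n+3)) := by
    intro n
    have hB : (1 : ℝ) + (y (n+2))⁻¹ = (1 + y (n+2)) / y (n+2) := by
      rw [add_div, div_self (hz _), inv_eq_one_div]; ring
    have hne : ((1:ℝ) + y (n+2))^2 ≠ 0 := pow_ne_zero _ (h1 _)
    rw [hB, div_pow, div_div_eq_mul_div, eq_div_iff hne]
    constructor
    · intro h; linear_combination h
    · intro h; linear_combination h
  have keyF : ∀ n : ℕ, (y n * y (n+4) * (1 + y (n+2))^2 =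
        (y (n+2))^2 * (1 + y (n+1)) * (1 + y (n+3))) ↔
      f (n+1) ^ 2 = f n * f (n+2) := by
    intro n
    simp only [hf]
    have c1 := h1 (n+1); have c2 := h1 (n+2); have c3 := h1 (n+3)
    constructor
    · intro h
      field_simp
      linear_combination (-(y (n+1)^2 * y (n+2)^2 * y (n+3)^2)) * h
    · intro h
      field_simp at h
      have hc : (y (n+1))^2 * (y (n+2))^2 * (y (n+3))^2 ≠ 0 := by
        have := hz (n+1); have := hz (n+2); have := hz (n+3); positivity
      apply mul_right_cancel₀ hc
      linear_combination -h
  -- q-PI equation at n with constant c equals f n = c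
  have keyQ : ∀ (n : ℕ) (c : ℝ), (y (n + 2) * y n = c * (1 + y (n + 1)) / (y (n + 1)) ^ 2)
      ↔ f n = c := by
    intro n c
    simp only [hf]
    rw [eq_div_iff (pow_ne_zero 2 (hz (n+1))), div_eq_iff (h1 (n+1))]
  constructor
  · intro hY
    have hgeo : ∀ n, f (n+1) ^ 2 = f n * f (n+2) :=
      fun n => (keyF n).mp ((keyY n).mp (hY n))
    refine ⟨f 0, f 1 / f 0, hfpos 0, div_pos (hfpos 1) (hfpos 0), ?_⟩
    have hstep : ∀ n, f (n+1) * f 0 = f n * f 1 := by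
      intro n
      induction n with
      | zero => ring
      | succ k ih =>
        have h := hgeo k
        have hk := (hfpos k).ne'
        have : f (k+2) * f k = f (k+1) * f (k+1) := by linarith [h]
        apply mul_left_cancel₀ hk
        calc f k * (f (k+2) * f 0) = (f (k+2) * f k) * f 0 := by ring
          _ = (f (k+1) * f (k+1)) * f 0 := by rw [this]
          _ = f (k+1) * (f (k+1) * f 0) := by ring
          _ = f (k+1) * (f k * f 1) := by rw [ih]
          _ = f k * (f (k+1) * f 1) := by ring
    have hgen : ∀ n, f n = f 0 * (f 1 / f 0) ^ n := by
      intro n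
      induction n with
      | zero => simp
      | succ k ih =>
        have h0 := (hfpos 0).ne'
        have := hstep k
        rw [pow_succ, ← mul_assoc]
        rw [← ih]
        field_simp
        linarith [this]
    intro n
    exact (keyQ n (f 0 * (f 1 / f 0) ^ n)).mpr (hgen n)
  · rintro ⟨β, 𝔮, hβ, hq, hP⟩
    have hfn : ∀ n, f n = β * 𝔮 ^ n := fun n => (keyQ n (β * 𝔮 ^ n)).mp (hP n)
    intro n
    refine (keyY n).mpr ((keyF n).mpr ?_)
    rw [hfn, hfn, hfn]
    ring
end

section
/- Let y : ℕ → ℝ be a sequence with y_n > 0 for all n, and define Z_n := y_{n+2} · y_{n+1}^2 · y_n / (1 + y_{n+1}) for all n. Then y satisfies the Somos-4 Y-system y_{n+4} · y_n = (1 + y_{n+3})(1 + y_{n+1}) / (1 + y_{n+2}^{-1})^2 for all n ∈ ℕ if and only if Z satisfies Z_n · Z_{n+2} = Z_{n+1}^2 for all n ∈ ℕ. -/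
lemma somos_key (a b c d e : ℝ) (hb : 0 < b) (hc : 0 < c) (hd : 0 < d) :
    e * a = (1 + d) * (1 + b) / (1 + c⁻¹) ^ 2 ↔
      (c * b ^ 2 * a / (1 + b)) * (e * d ^ 2 * c / (1 + d)) =
        (d * c ^ 2 * b / (1 + c)) ^ 2 := by
  have hb1 : (1:ℝ) + b ≠ 0 := by positivity
  have hc1 : (1:ℝ) + c ≠ 0 := by positivity
  have hd1 : (1:ℝ) + d ≠ 0 := by positivity
  have hc0 : c ≠ 0 := ne_of_gt hc
  have hbdc : (b ^ 2 * d ^ 2 * c ^ 2 : ℝ) ≠ 0 := by positivity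
  have hkey : (1 + c⁻¹) ^ 2 = (1 + c) ^ 2 / c ^ 2 := by
    field_simp; ring
  rw [hkey]
  constructor
  · intro h
    field_simp at h ⊢
    linear_combination h
  · intro h
    field_simp at h ⊢
    apply mul_left_cancel₀ hbdc
    linear_combination b ^ 2 * d ^ 2 * c ^ 2 * h

/-- A positive sequence `y` satisfies the Somos-4 Y-system iff the quantity
`Z_n = y_{n+2} y_{n+1}^2 y_n / (1 + y_{n+1})` satisfies `Z_n Z_{n+2} = Z_{n+1}^2`. -/
theorem somos4_Ysystem_iff_Zsystem (y : ℕ → ℝ) (hy : ∀ n, 0 < y n)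
    (Z : ℕ → ℝ)
    (hZ : ∀ n, Z n = y (n + 2) * (y (n + 1)) ^ 2 * y n / (1 + y (n + 1))) :
    (∀ n : ℕ, y (n + 4) * y n =
      (1 + y (n + 3)) * (1 + y (n + 1)) / (1 + (y (n + 2))⁻¹) ^ 2) ↔
    (∀ n : ℕ, Z n * Z (n + 2) = (Z (n + 1)) ^ 2) := by
  have key : ∀ n : ℕ,
      (y (n + 4) * y n =
        (1 + y (n + 3)) * (1 + y (n + 1)) / (1 + (y (n + 2))⁻¹) ^ 2) ↔
      (Z n * Z (n + 2) = (Z (n + 1)) ^ 2) := by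
    intro n
    rw [hZ n, hZ (n + 2), hZ (n + 1)]
    have e1 : n + 2 + 2 = n + 4 := by ring
    have e2 : n + 2 + 1 = n + 3 := by ring
    have e3 : n + 1 + 2 = n + 3 := by ring
    have e4 : n + 1 + 1 = n + 2 := by ring
    rw [e1, e2, e3, e4]
    exact somos_key (y n) (y (n + 1)) (y (n + 2)) (y (n + 3)) (y (n + 4))
      (hy _) (hy _) (hy _)
  exact forall_congr' key
end

section
/- Let x : ℕ → ℝ be a sequence with x_n > 0 for all n satisfying the Somos-4 recurrence x_{n+4} · x_n = x_{n+3} · x_{n+1} + x_{n+2}^2 for all n ∈ ℕ. Then the gauge-invariant quantities Y_n := x_n · x_{n+2} / x_{n+1}^2 satisfy the second-order recurrence Y_{n+2} · Y_n = (Y_{n+1} + 1) / Y_{n+1}^2 for all n ∈ ℕ. -/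
/-- If a positive sequence satisfies the Somos-4 recurrence, then the gauge-invariant
quantities `Y_n = x_n x_{n+2}/x_{n+1}^2` satisfy the QRT-type recurrence
`Y_{n+2} Y_n = (Y_{n+1}+1)/Y_{n+1}^2`. -/
theorem somos4_to_QRT (x : ℕ → ℝ) (hx : ∀ n, 0 < x n)
    (hrec : ∀ n : ℕ, x (n + 4) * x n = x (n + 3) * x (n + 1) + (x (n + 2)) ^ 2)
    (Y : ℕ → ℝ) (hY : ∀ n, Y n = x n * x (n + 2) / (x (n + 1)) ^ 2) :
    ∀ n : ℕ, Y (n + 2) * Y n = (Y (n + 1) + 1) / (Y (n + 1)) ^ 2 := by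
  intro n
  have h0 := (hx n).ne'
  have h1 := (hx (n+1)).ne'
  have h2 := (hx (n+2)).ne'
  have h3 := (hx (n+3)).ne'
  have h4 := (hx (n+4)).ne'
  have hr := hrec n
  rw [hY, hY, hY]
  have : n + 2 + 1 = n + 3 := by ring
  rw [this]
  have : n + 2 + 2 = n + 4 := by ring
  rw [this]
  have : n + 1 + 1 = n + 2 := by ring
  rw [this]
  have : n + 1 + 2 = n + 3 := by ring
  rw [this]
  field_simp
  linear_combination hr
end

section
/- Let Y : ℕ → ℝ be a sequence with Y_n > 0 for all n satisfying Y_{n+2} · Y_n = (Y_{n+1} + 1) / Y_{n+1}^2 for all n ∈ ℕ. Then the quantity H_n := ((Y_n Y_{n+1})^2 + Y_n + Y_{n+1} + 1) / (Y_n Y_{n+1}) is a first integral: H_{n+1} = H_n for all n ∈ ℕ. Equivalently, each point (Y_n, Y_{n+1}) lies on the fixed biquadratic curve (Y_1 Y_2)^2 − H · Y_1 Y_2 + Y_1 + Y_2 + 1 = 0 with H = H_0. -/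
/-- For a positive solution of the Somos-4 QRT recurrence, the quantity
`H_n = ((Y_n Y_{n+1})^2 + Y_n + Y_{n+1} + 1)/(Y_n Y_{n+1})` is a first integral,
i.e. each point `(Y_n, Y_{n+1})` lies on the fixed biquadratic curve with `H = H_0`. -/
theorem somos4_QRT_first_integral (Y : ℕ → ℝ) (hY : ∀ n, 0 < Y n)
    (hrec : ∀ n : ℕ, Y (n + 2) * Y n = (Y (n + 1) + 1) / (Y (n + 1)) ^ 2)
    (H : ℕ → ℝ)
    (hH : ∀ n, H n = ((Y n * Y (n + 1)) ^ 2 + Y n + Y (n + 1) + 1) / (Y n * Y (n + 1))) :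
    (∀ n : ℕ, H (n + 1) = H n) ∧
    (∀ n : ℕ, (Y n * Y (n + 1)) ^ 2 - H 0 * (Y n * Y (n + 1))
        + Y n + Y (n + 1) + 1 = 0) := by
  have hstep : ∀ n : ℕ, H (n + 1) = H n := by
    intro n
    have ha := hY n
    have hb := hY (n + 1)
    have hc := hY (n + 2)
    have hr := hrec n
    have hr' : Y (n + 2) * Y n * Y (n + 1) ^ 2 = Y (n + 1) + 1 := by
      field_simp at hr
      linarith [hr]
    rw [hH n, hH (n + 1)]
    rw [div_eq_div_iff (by positivity) (by positivity)]
    have e2 : Y (n + 1 + 1) = Y (n + 2) := by norm_num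
    rw [e2]
    linear_combination (Y (n + 1) * (Y (n + 2) - Y n)) * hr'
  refine ⟨hstep, ?_⟩
  intro n
  have hHn : H n = H 0 := by
    induction n with
    | zero => rfl
    | succ k ih => rw [hstep k, ih]
  have hb : (0:ℝ) < Y n * Y (n + 1) := mul_pos (hY n) (hY (n + 1))
  have := hH n
  rw [hHn, eq_div_iff (ne_of_gt hb)] at this
  nlinarith [this]
end

section
/- Let β > 0, 𝔮 > 0, and let x : ℕ → ℝ be a sequence with x_n > 0 for all n satisfying the non-autonomous bilinear recurrence x_{n+4} · x_n = β · 𝔮^n · (x_{n+3} x_{n+1} + x_{n+2}^2) for all n ∈ ℕ. Then y_n := x_n · x_{n+2} / x_{n+1}^2 satisfies the q-Painlevé I equation y_{n+2} · y_n = β · 𝔮^n · (1 + y_{n+1}) / y_{n+1}^2 for all n ∈ ℕ. -/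
/-- If a positive sequence satisfies the non-autonomous bilinear recurrence
`x_{n+4} x_n = β 𝔮^n (x_{n+3} x_{n+1} + x_{n+2}^2)`, then `y_n = x_n x_{n+2}/x_{n+1}^2`
satisfies the q-Painlevé I equation `y_{n+2} y_n = β 𝔮^n (1+y_{n+1})/y_{n+1}^2`. -/
theorem bilinear_dPI_to_qPI (β 𝔮 : ℝ) (hβ : 0 < β) (h𝔮 : 0 < 𝔮)
    (x : ℕ → ℝ) (hx : ∀ n, 0 < x n)
    (hrec : ∀ n : ℕ, x (n + 4) * x n = β * 𝔮 ^ n * (x (n + 3) * x (n + 1) + (x (n + 2)) ^ 2))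
    (y : ℕ → ℝ) (hy : ∀ n, y n = x n * x (n + 2) / (x (n + 1)) ^ 2) :
    ∀ n : ℕ, y (n + 2) * y n = β * 𝔮 ^ n * (1 + y (n + 1)) / (y (n + 1)) ^ 2 := by
  intro n
  have h0 := (hx n).ne'
  have h1 := (hx (n+1)).ne'
  have h2 := (hx (n+2)).ne'
  have h3 := (hx (n+3)).ne'
  have h4 := (hx (n+4)).ne'
  have hr := hrec n
  rw [hy, hy, hy]
  field_simp
  linear_combination hr
end

section
/- Let c₁, c₂, d₁, d₂ be positive reals satisfying the constraints c₁c₂d₁ = 1 and d₁d₂ = 1, and set Y₁ := √(c₁d₁/c₂) and Y₂ := √(c₂d₁/c₁). Then the Hamiltonian H₁ = c₁ + c₂ + d₁ + d₂ of the 2-particle relativistic Toda lattice equals ((Y₁Y₂)² + Y₁ + Y₂ + 1) / (Y₁Y₂), i.e. it coincides with the first integral of the Somos-4 QRT map obtained by solving the biquadratic (Y₁Y₂)² − H·Y₁Y₂ + Y₁ + Y₂ + 1 = 0 for H. -/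
/-- On the symplectic leaf `c₁c₂d₁ = 1`, `d₁d₂ = 1` of the 2-particle relativistic Toda
lattice, the Hamiltonian `H₁ = c₁ + c₂ + d₁ + d₂` coincides with the Somos-4 first
integral `((Y₁Y₂)² + Y₁ + Y₂ + 1)/(Y₁Y₂)` in the coordinates
`Y₁ = √(c₁d₁/c₂)`, `Y₂ = √(c₂d₁/c₁)`. -/
theorem relToda_hamiltonian_eq_somos4_integral
    (c₁ c₂ d₁ d₂ : ℝ) (hc₁ : 0 < c₁) (hc₂ : 0 < c₂) (hd₁ : 0 < d₁) (hd₂ : 0 < d₂)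
    (h1 : c₁ * c₂ * d₁ = 1) (h2 : d₁ * d₂ = 1)
    (Y₁ Y₂ : ℝ) (hY₁ : Y₁ = Real.sqrt (c₁ * d₁ / c₂)) (hY₂ : Y₂ = Real.sqrt (c₂ * d₁ / c₁)) :
    c₁ + c₂ + d₁ + d₂ = ((Y₁ * Y₂) ^ 2 + Y₁ + Y₂ + 1) / (Y₁ * Y₂) := by
  have e1 : c₁ * d₁ / c₂ = (c₁ * d₁) ^ 2 := by
    field_simp
    nlinarith [h1]
  have e2 : c₂ * d₁ / c₁ = (c₂ * d₁) ^ 2 := by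
    field_simp
    nlinarith [h1]
  have hY₁' : Y₁ = c₁ * d₁ := by
    rw [hY₁, e1, Real.sqrt_sq (by positivity)]
  have hY₂' : Y₂ = c₂ * d₁ := by
    rw [hY₂, e2, Real.sqrt_sq (by positivity)]
  subst hY₁' hY₂'
  field_simp
  linear_combination (d₁*(c₁+c₂+d₁+d₂) - d₁^2*(c₁*c₂*d₁+1))*h1 + h2
end

section
/- Let c₁, c₂, d₁, d₂ be positive reals satisfying c₁c₂d₁ = 1 and d₁d₂ = 1, and set Y₁ := √(c₁d₁/c₂), Y₂ := √(c₂d₁/c₁). Define the Bäcklund transformation c̃₁ = c₂d₁/(c₂+d₂), c̃₂ = c₁, d̃₁ = c₂+d₂, d̃₂ = d₁d₂/(c₂+d₂). Then the Casimirs are preserved, i.e. c̃₁c̃₂d̃₁ = c₁c₂d₁ = 1 and d̃₁d̃₂ = d₁d₂ = 1, and the transformed variables Ỹ₁ := √(c̃₁d̃₁/c̃₂), Ỹ₂ := √(c̃₂d̃₁/c̃₁) satisfy Ỹ₁ = Y₂ and Ỹ₂ = (Y₂ + 1)/(Y₁Y₂²); that is, on the symplectic leaves the Bäcklund transformation coincides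 with the Somos-4 QRT map (Y₁, Y₂) ↦ (Y₂, (Y₂+1)/(Y₁Y₂²)). -/
/-- On the symplectic leaf `c₁c₂d₁ = 1`, `d₁d₂ = 1`, the Bäcklund transformation
`c̃₁ = c₂d₁/(c₂+d₂)`, `c̃₂ = c₁`, `d̃₁ = c₂+d₂`, `d̃₂ = d₁d₂/(c₂+d₂)` of the 2-particle
relativistic Toda lattice preserves the Casimirs and coincides with the Somos-4 QRT map
`(Y₁, Y₂) ↦ (Y₂, (Y₂+1)/(Y₁Y₂²))` in the coordinates `Y₁ = √(c₁d₁/c₂)`, `Y₂ = √(c₂d₁/c₁)`. -/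
theorem relToda_backlund_is_somos4_QRT
    (c₁ c₂ d₁ d₂ : ℝ) (hc₁ : 0 < c₁) (hc₂ : 0 < c₂) (hd₁ : 0 < d₁) (hd₂ : 0 < d₂)
    (h1 : c₁ * c₂ * d₁ = 1) (h2 : d₁ * d₂ = 1)
    (Y₁ Y₂ : ℝ) (hY₁ : Y₁ = Real.sqrt (c₁ * d₁ / c₂)) (hY₂ : Y₂ = Real.sqrt (c₂ * d₁ / c₁))
    (c₁' c₂' d₁' d₂' : ℝ)
    (hc₁' : c₁' = c₂ * d₁ / (c₂ + d₂)) (hc₂' : c₂' = c₁)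
    (hd₁' : d₁' = c₂ + d₂) (hd₂' : d₂' = d₁ * d₂ / (c₂ + d₂))
    (Y₁' Y₂' : ℝ) (hY₁' : Y₁' = Real.sqrt (c₁' * d₁' / c₂'))
    (hY₂' : Y₂' = Real.sqrt (c₂' * d₁' / c₁')) :
    (c₁' * c₂' * d₁' = 1 ∧ d₁' * d₂' = 1) ∧
    Y₁' = Y₂ ∧ Y₂' = (Y₂ + 1) / (Y₁ * Y₂ ^ 2) := by
  have hcd : 0 < c₂ + d₂ := by positivity
  have hc₁eq : c₁ = 1 / (c₂ * d₁) := by field_simp; linarith [h1]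
  have hd₂eq : d₂ = 1 / d₁ := by field_simp; linarith [h2]
  have hY₁v : Y₁ = 1 / c₂ := by
    rw [hY₁, show c₁ * d₁ / c₂ = (1 / c₂) ^ 2 by rw [hc₁eq]; field_simp]
    exact Real.sqrt_sq (by positivity)
  have hY₂v : Y₂ = c₂ * d₁ := by
    rw [hY₂, show c₂ * d₁ / c₁ = (c₂ * d₁) ^ 2 by rw [hc₁eq]; field_simp]
    exact Real.sqrt_sq (by positivity)
  have hY₁'v : Y₁' = c₂ * d₁ := by
    rw [hY₁', hc₁', hd₁', hc₂',
      show c₂ * d₁ / (c₂ + d₂) * (c₂ + d₂) / c₁ = (c₂ * d₁) ^ 2 by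
        rw [hc₁eq]; field_simp]
    exact Real.sqrt_sq (by positivity)
  have hY₂'v : Y₂' = c₁ * (c₂ + d₂) := by
    rw [hY₂', hc₁', hd₁', hc₂',
      show c₁ * (c₂ + d₂) / (c₂ * d₁ / (c₂ + d₂)) = (c₁ * (c₂ + d₂)) ^ 2 by
        rw [hc₁eq]; field_simp]
    exact Real.sqrt_sq (by positivity)
  refine ⟨⟨?_, ?_⟩, ?_, ?_⟩
  · rw [hc₁', hc₂', hd₁']; field_simp; linarith [h1]
  · rw [hd₁', hd₂']; field_simp; linarith [h2]
  · rw [hY₁'v, hY₂v]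
  · rw [hY₂'v, hY₁v, hY₂v, hc₁eq, hd₂eq]; field_simp
end

section
/- Let N ≥ 2 and let B = (b_{jk}) be an N×N skew-symmetric integer matrix satisfying the period-1 conditions: b_{j,N} = b_{1,j+1} for 1 ≤ j ≤ N−1, and b_{j+1,k+1} = b_{j,k} + b_{1,j+1}·[−b_{1,k+1}]₊ − b_{1,k+1}·[−b_{1,j+1}]₊ for 1 ≤ j,k ≤ N−1, where [b]₊ := max(b,0). Then the reversal of each row equals the negative of the opposite row: b_{j, N−k+1} = −b_{N−j+1, k} for all 1 ≤ j,k ≤ N; equivalently, B is symmetric about the skew diagonal, b_{jk} = b_{N−k+1, N−j+1} for all j,k. -/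
private def cc (b : ℕ → ℕ → ℤ) (x y : ℕ) : ℤ :=
  b 1 x * max (-(b 1 y)) 0 - b 1 y * max (-(b 1 x)) 0

private lemma cc_swap (b : ℕ → ℕ → ℤ) {x y x' y' : ℕ}
    (hx : b 1 x' = b 1 y) (hy : b 1 y' = b 1 x) :
    cc b x' y' = - cc b x y := by
  simp only [cc, hx, hy]; ring

private lemma diag (N : ℕ) (b : ℕ → ℕ → ℤ)
    (h2 : ∀ j k, 1 ≤ j → j ≤ N - 1 → 1 ≤ k → k ≤ N - 1 →
      b (j + 1) (k + 1) = b j k + b 1 (j + 1) * max (-(b 1 (k + 1))) 0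
        - b 1 (k + 1) * max (-(b 1 (j + 1))) 0) :
    ∀ t k0, 1 ≤ k0 → k0 + t ≤ N →
      b (1 + t) (k0 + t) = b 1 k0 + ∑ i ∈ Finset.range t, cc b (i + 2) (k0 + i + 1) := by
  intro t
  induction t with
  | zero => intro k0 _ _; simp
  | succ t ih =>
    intro k0 hk1 hkN
    have h := h2 (1 + t) (k0 + t) (by omega) (by omega) (by omega) (by omega)
    have hstep : b (1 + (t + 1)) (k0 + (t + 1)) = b (1 + t) (k0 + t) + cc b (1 + t + 1) (k0 + t + 1) := by
      rw [show 1 + (t + 1) = (1 + t) + 1 from by ring, show k0 + (t + 1) = (k0 + t) + 1 from by ring, h]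
      simp only [cc]; ring
    rw [hstep, ih k0 hk1 (by omega), Finset.sum_range_succ,
      show 1 + t + 1 = t + 2 from by ring]
    ring

private lemma pal (N : ℕ) (b : ℕ → ℕ → ℤ)
    (h1 : ∀ j, 1 ≤ j → j ≤ N - 1 → b j N = b 1 (j + 1))
    (h2 : ∀ j k, 1 ≤ j → j ≤ N - 1 → 1 ≤ k → k ≤ N - 1 →
      b (j + 1) (k + 1) = b j k + b 1 (j + 1) * max (-(b 1 (k + 1))) 0
        - b 1 (k + 1) * max (-(b 1 (j + 1))) 0) :
    ∀ m, 2 ≤ m → m ≤ N → b 1 m = b 1 (N + 2 - m) := by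
  intro m
  induction m using Nat.strong_induction_on with
  | _ m ih =>
    intro hm2 hmN
    have hd := diag N b h2 (m - 2) (N - m + 2) (by omega) (by omega)
    rw [show 1 + (m - 2) = m - 1 from by omega, show N - m + 2 + (m - 2) = N from by omega] at hd
    have hrow := h1 (m - 1) (by omega) (by omega)
    rw [show m - 1 + 1 = m from by omega] at hrow
    -- the sum vanishes by reflection
    set n := m - 2 with hn
    set g : ℕ → ℤ := fun i => cc b (i + 2) (N - m + 2 + i + 1) with hg
    have hsum : ∑ i ∈ Finset.range n, g i = 0 := by
      have hrefl := Finset.sum_range_reflect g n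
      have hneg : ∑ i ∈ Finset.range n, g (n - 1 - i) = ∑ i ∈ Finset.range n, (- g i) := by
        refine Finset.sum_congr rfl (fun i hi => ?_)
        have hi' : i < n := Finset.mem_range.mp hi
        have e1 : n - 1 - i + 2 = m - 1 - i := by omega
        have e2 : N - m + 2 + (n - 1 - i) + 1 = N - i := by omega
        have hx : b 1 (m - 1 - i) = b 1 (N - m + 2 + i + 1) := by
          have := ih (m - 1 - i) (by omega) (by omega) (by omega)
          rw [this, show N + 2 - (m - 1 - i) = N - m + 2 + i + 1 from by omega]
        have hy : b 1 (N - i) = b 1 (i + 2) := by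
          have := ih (i + 2) (by omega) (by omega) (by omega)
          rw [this, show N + 2 - (i + 2) = N - i from by omega]
        show g (n - 1 - i) = - g i
        simp only [hg, e1, e2]
        exact cc_swap b hx hy
      rw [hneg, Finset.sum_neg_distrib] at hrefl
      linarith
    rw [hsum] at hd
    rw [← hrow, hd, show N - m + 2 = N + 2 - m from by omega]
    ring

private lemma main_le (N : ℕ) (b : ℕ → ℕ → ℤ)
    (h1 : ∀ j, 1 ≤ j → j ≤ N - 1 → b j N = b 1 (j + 1))
    (h2 : ∀ j k, 1 ≤ j → j ≤ N - 1 → 1 ≤ k → k ≤ N - 1 →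
      b (j + 1) (k + 1) = b j k + b 1 (j + 1) * max (-(b 1 (k + 1))) 0
        - b 1 (k + 1) * max (-(b 1 (j + 1))) 0) :
    ∀ j k, 1 ≤ j → k ≤ N → j ≤ k → j + k ≤ N + 1 →
      b j k = b (N - k + 1) (N - j + 1) := by
  intro j k hj hk hjk hjkN
  have hpal := pal N b h1 h2
  have hd1 := diag N b h2 (j - 1) (k - j + 1) (by omega) (by omega)
  rw [show 1 + (j - 1) = j from by omega, show k - j + 1 + (j - 1) = k from by omega] at hd1
  have hd2 := diag N b h2 (N - k) (k - j + 1) (by omega) (by omega)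
  rw [show 1 + (N - k) = N - k + 1 from by omega,
    show k - j + 1 + (N - k) = N - j + 1 from by omega] at hd2
  set F : ℕ → ℤ := fun i => cc b (i + 2) (k - j + 1 + i + 1) with hF
  have hsplit : ∑ i ∈ Finset.range (N - k), F i
      = ∑ i ∈ Finset.range (j - 1), F i + ∑ i ∈ Finset.Ico (j - 1) (N - k), F i := by
    simp only [Finset.range_eq_Ico]
    exact (Finset.sum_Ico_consecutive F (Nat.zero_le (j - 1)) (by omega)).symm
  have htail : ∑ i ∈ Finset.Ico (j - 1) (N - k), F i = 0 := by
    rw [Finset.sum_Ico_eq_sum_range]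
    set r := N - k - (j - 1) with hr
    set g : ℕ → ℤ := fun i => F (j - 1 + i) with hg
    have hrefl := Finset.sum_range_reflect g r
    have hneg : ∑ i ∈ Finset.range r, g (r - 1 - i) = ∑ i ∈ Finset.range r, (- g i) := by
      refine Finset.sum_congr rfl (fun i hi => ?_)
      have hi' : i < r := Finset.mem_range.mp hi
      have e0 : j - 1 + i + 2 = j + i + 1 := by omega
      have e0' : k - j + 1 + (j - 1 + i) + 1 = k + i + 1 := by omega
      have e1 : j - 1 + (r - 1 - i) + 2 = N - k + 1 - i := by omega
      have e2 : k - j + 1 + (j - 1 + (r - 1 - i)) + 1 = N - j + 1 - i := by omega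
      have hx : b 1 (N - k + 1 - i) = b 1 (k + i + 1) := by
        have := hpal (k + i + 1) (by omega) (by omega)
        rw [this, show N + 2 - (k + i + 1) = N - k + 1 - i from by omega]
      have hy : b 1 (N - j + 1 - i) = b 1 (j + i + 1) := by
        have := hpal (j + i + 1) (by omega) (by omega)
        rw [this, show N + 2 - (j + i + 1) = N - j + 1 - i from by omega]
      show g (r - 1 - i) = - g i
      simp only [hg, hF, e1, e2, e0, e0']
      exact cc_swap b hx hy
    rw [hneg, Finset.sum_neg_distrib] at hrefl
    linarith
  rw [hd1, hd2, hsplit, htail]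
  ring

/-- A skew-symmetric integer matrix satisfying the Fordy–Marsh period-1 conditions is
symmetric about the skew diagonal: the reversal of each row equals the negative of the
opposite row. Entries are indexed with `1 ≤ j, k ≤ N`. -/
theorem period1_matrix_skew_diagonal_symmetry
    (N : ℕ) (hN : 2 ≤ N) (b : ℕ → ℕ → ℤ)
    (hskew : ∀ j k, 1 ≤ j → j ≤ N → 1 ≤ k → k ≤ N → b j k = - b k j)
    (h1 : ∀ j, 1 ≤ j → j ≤ N - 1 → b j N = b 1 (j + 1))
    (h2 : ∀ j k, 1 ≤ j → j ≤ N - 1 → 1 ≤ k → k ≤ N - 1 →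
      b (j + 1) (k + 1) = b j k + b 1 (j + 1) * max (-(b 1 (k + 1))) 0
        - b 1 (k + 1) * max (-(b 1 (j + 1))) 0) :
    ∀ j k, 1 ≤ j → j ≤ N → 1 ≤ k → k ≤ N →
      b j (N - k + 1) = - b (N - j + 1) k ∧ b j k = b (N - k + 1) (N - j + 1) := by
  have hle := main_le N b h1 h2
  have Gle : ∀ j k, 1 ≤ j → j ≤ N → 1 ≤ k → k ≤ N → j ≤ k →
      b j k = b (N - k + 1) (N - j + 1) := by
    intro j k hj hjN hk hkN hjk
    by_cases hc : j + k ≤ N + 1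
    · exact hle j k hj hkN hjk hc
    · have h := hle (N - k + 1) (N - j + 1) (by omega) (by omega) (by omega) (by omega)
      rw [show N - (N - j + 1) + 1 = j from by omega,
        show N - (N - k + 1) + 1 = k from by omega] at h
      exact h.symm
  have G : ∀ j k, 1 ≤ j → j ≤ N → 1 ≤ k → k ≤ N →
      b j k = b (N - k + 1) (N - j + 1) := by
    intro j k hj hjN hk hkN
    rcases le_total j k with h | h
    · exact Gle j k hj hjN hk hkN h
    · have hkj := Gle k j hk hkN hj hjN h
      have hs1 := hskew j k hj hjN hk hkN
      have hs2 := hskew (N - k + 1) (N - j + 1) (by omega) (by omega) (by omega) (by omega)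
      rw [hs1, hkj, hs2]
  intro j k hj hjN hk hkN
  refine ⟨?_, G j k hj hjN hk hkN⟩
  have hG := G j (N - k + 1) hj hjN (by omega) (by omega)
  rw [show N - (N - k + 1) + 1 = k from by omega] at hG
  rw [hG]
  exact hskew k (N - j + 1) hk hkN (by omega) (by omega)
end

section
/- Let N ≥ 2 and let B = (b_{jk}) be an N×N skew-symmetric integer matrix satisfying the period-1 conditions: b_{j,N} = b_{1,j+1} for 1 ≤ j ≤ N−1, and b_{j+1,k+1} = b_{j,k} + b_{1,j+1}·[−b_{1,k+1}]₊ − b_{1,k+1}·[−b_{1,j+1}]₊ for 1 ≤ j,k ≤ N−1, where [b]₊ := max(b,0). Let im B ⊆ ℚ^N denote the ℚ-span of the rows of B. Then: (i) if v ∈ im B, then its reversal r(v), defined by r(v)_j = v_{N−j+1}, also lies in im B; (ii) if moreover v_N = 0 (i.e. the support of v is contained in [1, N−1]), then the shift s(v), defined by s(v)₁ = 0 and s(v)_j = v_{j−1} for 2 ≤ j ≤ N, also lies in im B. -/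
private def F (x y : ℤ) : ℤ := x * max (-y) 0 - y * max (-x) 0

private lemma F_antisymm (x y : ℤ) : F y x = - F x y := by unfold F; ring

private lemma sum_reflect_cancel (g : ℕ → ℤ)
    (hg : ∀ i, i < m → g (m - 1 - i) = - g i) :
    ∑ i ∈ Finset.range m, g i = 0 := by
  have h1 : ∑ i ∈ Finset.range m, g (m - 1 - i) = ∑ i ∈ Finset.range m, g i :=
    Finset.sum_range_reflect g m
  have h2 : ∑ i ∈ Finset.range m, g (m - 1 - i) = ∑ i ∈ Finset.range m, (- g i) :=
    Finset.sum_congr rfl (fun i hi => hg i (Finset.mem_range.mp hi))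
  rw [h2, Finset.sum_neg_distrib] at h1
  omega

private lemma tele (N : ℕ) (b : ℕ → ℕ → ℤ)
    (h2 : ∀ j k, 1 ≤ j → j ≤ N - 1 → 1 ≤ k → k ≤ N - 1 →
      b (j + 1) (k + 1) = b j k + b 1 (j + 1) * max (-(b 1 (k + 1))) 0
        - b 1 (k + 1) * max (-(b 1 (j + 1))) 0) :
    ∀ m k, 1 ≤ k → k + m ≤ N →
      b (m + 1) (k + m) = b 1 k + ∑ i ∈ Finset.range m,
        F (b 1 (i + 2)) (b 1 (k + i + 1)) := by
  intro m
  induction m with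
  | zero => simp
  | succ m ih =>
    intro k hk hkm
    have h := h2 (m + 1) (k + m) (by omega) (by omega) (by omega) (by omega)
    rw [Finset.sum_range_succ, show k + (m + 1) = (k + m) + 1 by omega, h,
      ih k hk (by omega), show m + 2 = m + 1 + 1 by omega]
    unfold F
    ring

private lemma palin (N : ℕ) (b : ℕ → ℕ → ℤ) (hN : 2 ≤ N)
    (h1 : ∀ j, 1 ≤ j → j ≤ N - 1 → b j N = b 1 (j + 1))
    (h2 : ∀ j k, 1 ≤ j → j ≤ N - 1 → 1 ≤ k → k ≤ N - 1 →
      b (j + 1) (k + 1) = b j k + b 1 (j + 1) * max (-(b 1 (k + 1))) 0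
        - b 1 (k + 1) * max (-(b 1 (j + 1))) 0) :
    ∀ j, 1 ≤ j → j ≤ N - 1 → b 1 (j + 1) = b 1 (N - j + 1) := by
  intro j
  induction j using Nat.strong_induction_on with
  | _ j IH =>
    intro hj1 hj2
    obtain ⟨m, rfl⟩ : ∃ m, j = m + 1 := ⟨j - 1, by omega⟩
    have ht := tele N b h2 m (N - (m + 1) + 1) (by omega) (by omega)
    rw [show N - (m + 1) + 1 + m = N by omega] at ht
    rw [← h1 (m + 1) (by omega) (by omega), ht]
    have hS : ∑ i ∈ Finset.range m,
        F (b 1 (i + 2)) (b 1 (N - (m + 1) + 1 + i + 1)) = 0 := by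
      apply sum_reflect_cancel
      intro i hi
      have e1 : m - 1 - i + 2 = m - i + 1 := by omega
      have e2 : N - (m + 1) + 1 + (m - 1 - i) + 1 = N - i := by omega
      have e3 : N - (m + 1) + 1 + i + 1 = N - (m - i) + 1 := by omega
      rw [e1, e2, e3]
      have p1 : b 1 (i + 1 + 1) = b 1 (N - (i + 1) + 1) :=
        IH (i + 1) (by omega) (by omega) (by omega)
      have p2 : b 1 (m - i + 1) = b 1 (N - (m - i) + 1) :=
        IH (m - i) (by omega) (by omega) (by omega)
      rw [show N - i = N - (i + 1) + 1 by omega, ← p1, ← p2,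
        show i + 1 + 1 = i + 2 by omega]
      exact F_antisymm _ _
    rw [hS]
    omega

private lemma sum_reflect_eq (T : ℕ → ℤ) (M a c : ℕ) (hab : a + c = M + 1)
    (hT : ∀ i, i ≤ M → T (M - i) = - T i) :
    ∑ i ∈ Finset.range a, T i = ∑ i ∈ Finset.range c, T i := by
  have hZ : ∑ i ∈ Finset.range (M + 1), T i = 0 :=
    sum_reflect_cancel T (fun i hi => by
      rw [show M + 1 - 1 - i = M - i by omega]; exact hT i (by omega))
  have hsplit : ∑ i ∈ Finset.range (M + 1), T i
      = ∑ i ∈ Finset.range a, T i + ∑ i ∈ Finset.range c, T (a + i) := by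
    rw [← hab, Finset.sum_range_add]
  have h2 : ∑ i ∈ Finset.range c, T (a + i)
      = ∑ i ∈ Finset.range c, (- T (c - 1 - i)) := by
    refine Finset.sum_congr rfl (fun i hi => ?_)
    have hi' := Finset.mem_range.mp hi
    rw [show a + i = M - (c - 1 - i) by omega]
    exact hT _ (by omega)
  have h3 : ∑ i ∈ Finset.range c, T (c - 1 - i) = ∑ i ∈ Finset.range c, T i :=
    Finset.sum_range_reflect T c
  rw [h2, Finset.sum_neg_distrib, h3] at hsplit
  omega

private lemma persym_le (N : ℕ) (b : ℕ → ℕ → ℤ) (hN : 2 ≤ N)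
    (h1 : ∀ j, 1 ≤ j → j ≤ N - 1 → b j N = b 1 (j + 1))
    (h2 : ∀ j k, 1 ≤ j → j ≤ N - 1 → 1 ≤ k → k ≤ N - 1 →
      b (j + 1) (k + 1) = b j k + b 1 (j + 1) * max (-(b 1 (k + 1))) 0
        - b 1 (k + 1) * max (-(b 1 (j + 1))) 0) :
    ∀ j k, 1 ≤ j → j ≤ k → k ≤ N → b j k = b (N + 1 - k) (N + 1 - j) := by
  intro j k hj hjk hkN
  by_cases hd : j = 1 ∧ k = N
  · rw [hd.1, hd.2, show N + 1 - N = 1 by omega, show N + 1 - 1 = N by omega]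
  have t1 := tele N b h2 (j - 1) (k - j + 1) (by omega) (by omega)
  have t2 := tele N b h2 (N - k) (k - j + 1) (by omega) (by omega)
  rw [show j - 1 + 1 = j by omega, show k - j + 1 + (j - 1) = k by omega] at t1
  rw [show N - k + 1 = N + 1 - k by omega,
    show k - j + 1 + (N - k) = N + 1 - j by omega] at t2
  rw [t1, t2]
  congr 1
  exact sum_reflect_eq _ (N - k + j - 2) (j - 1) (N - k)
    (by omega)
    (by
      intro i hi
      set M := N - k + j - 2 with hM
      have e1 : M - i + 2 = N - k + j - i := by omega
      have e2 : k - j + 1 + (M - i) + 1 = N - i := by omega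
      rw [e1, e2]
      have p1 : b 1 (i + 1 + 1) = b 1 (N - (i + 1) + 1) :=
        palin N b hN h1 h2 (i + 1) (by omega) (by omega)
      have p2 : b 1 (k - j + i + 1 + 1) = b 1 (N - (k - j + i + 1) + 1) :=
        palin N b hN h1 h2 (k - j + i + 1) (by omega) (by omega)
      rw [show N - i = N - (i + 1) + 1 by omega, ← p1,
        show N - k + j - i = N - (k - j + i + 1) + 1 by omega, ← p2,
        show i + 1 + 1 = i + 2 by omega,
        show k - j + i + 1 + 1 = k - j + 1 + i + 1 by omega]
      exact F_antisymm _ _)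

private lemma persym (N : ℕ) (b : ℕ → ℕ → ℤ) (hN : 2 ≤ N)
    (hskew : ∀ j k, 1 ≤ j → j ≤ N → 1 ≤ k → k ≤ N → b j k = - b k j)
    (h1 : ∀ j, 1 ≤ j → j ≤ N - 1 → b j N = b 1 (j + 1))
    (h2 : ∀ j k, 1 ≤ j → j ≤ N - 1 → 1 ≤ k → k ≤ N - 1 →
      b (j + 1) (k + 1) = b j k + b 1 (j + 1) * max (-(b 1 (k + 1))) 0
        - b 1 (k + 1) * max (-(b 1 (j + 1))) 0) :
    ∀ j k, 1 ≤ j → j ≤ N → 1 ≤ k → k ≤ N → b j k = b (N + 1 - k) (N + 1 - j) := by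
  intro j k hj hjN hk hkN
  rcases le_or_gt j k with h | h
  · exact persym_le N b hN h1 h2 j k hj h hkN
  · rw [hskew j k hj hjN hk hkN, persym_le N b hN h1 h2 k j hk h.le hjN,
      hskew (N + 1 - j) (N + 1 - k) (by omega) (by omega) (by omega) (by omega)]
    ring



/-- For a skew-symmetric integer matrix satisfying the Fordy–Marsh period-1 conditions,
the row span `im B ⊆ ℚ^N` is invariant under the reversal map `r(v)_j = v_{N-j+1}`, and
under the shift map `s` (prepending a zero) whenever the last entry of `v` vanishes.
Entries of `b` are indexed with `1 ≤ j, k ≤ N`; vectors in `ℚ^N` are indexed by `Fin N`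
(so index `i : Fin N` corresponds to the `(i+1)`-st coordinate). -/
theorem period1_rowspan_reversal_and_shift
    (N : ℕ) (hN : 2 ≤ N) (b : ℕ → ℕ → ℤ)
    (hskew : ∀ j k, 1 ≤ j → j ≤ N → 1 ≤ k → k ≤ N → b j k = - b k j)
    (h1 : ∀ j, 1 ≤ j → j ≤ N - 1 → b j N = b 1 (j + 1))
    (h2 : ∀ j k, 1 ≤ j → j ≤ N - 1 → 1 ≤ k → k ≤ N - 1 →
      b (j + 1) (k + 1) = b j k + b 1 (j + 1) * max (-(b 1 (k + 1))) 0
        - b 1 (k + 1) * max (-(b 1 (j + 1))) 0)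
    (rows : Fin N → Fin N → ℚ)
    (hrows : ∀ j k : Fin N, rows j k = (b ((j : ℕ) + 1) ((k : ℕ) + 1) : ℚ))
    (imB : Submodule ℚ (Fin N → ℚ))
    (himB : imB = Submodule.span ℚ (Set.range rows)) :
    (∀ v : Fin N → ℚ, v ∈ imB → (fun i : Fin N => v i.rev) ∈ imB) ∧
    (∀ v : Fin N → ℚ, v ∈ imB → v ⟨N - 1, by omega⟩ = 0 →
      (fun i : Fin N =>
        if 0 < (i : ℕ) then
          v ⟨(i : ℕ) - 1, Nat.lt_of_le_of_lt (Nat.sub_le _ _) i.isLt⟩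
        else 0) ∈ imB) := by
  subst himB
  constructor
  · -- reversal part
    intro v hv
    set L : (Fin N → ℚ) →ₗ[ℚ] (Fin N → ℚ) := LinearMap.funLeft ℚ ℚ Fin.rev with hL
    have hgen : ∀ j : Fin N, L (rows j) ∈ Submodule.span ℚ (Set.range rows) := by
      intro j
      have hLr : L (rows j) = - rows j.rev := by
        funext i
        show rows j i.rev = - rows j.rev i
        rw [hrows, hrows]
        have hiv : ((Fin.rev i : Fin N) : ℕ) = N - 1 - (i : ℕ) := by
          simp [Fin.rev]; omega
        have hjv : ((Fin.rev j : Fin N) : ℕ) = N - 1 - (j : ℕ) := by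
          simp [Fin.rev]; omega
        rw [hiv, hjv]
        have hib := i.isLt
        have hjb := j.isLt
        have key : b ((j : ℕ) + 1) (N - 1 - (i : ℕ) + 1)
            = - b (N - 1 - (j : ℕ) + 1) ((i : ℕ) + 1) := by
          rw [persym N b hN hskew h1 h2 ((j : ℕ) + 1) (N - 1 - (i : ℕ) + 1)
            (by omega) (by omega) (by omega) (by omega),
            show N + 1 - (N - 1 - (i : ℕ) + 1) = (i : ℕ) + 1 by omega,
            show N + 1 - ((j : ℕ) + 1) = N - 1 - (j : ℕ) + 1 by omega,
            hskew ((i : ℕ) + 1) (N - 1 - (j : ℕ) + 1)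
            (by omega) (by omega) (by omega) (by omega)]
        rw [key]
        push_cast
        ring
      rw [hLr]
      exact Submodule.neg_mem _ (Submodule.subset_span ⟨j.rev, rfl⟩)
    have hle : Submodule.span ℚ (Set.range rows)
        ≤ Submodule.comap L (Submodule.span ℚ (Set.range rows)) :=
      Submodule.span_le.2 (by rintro _ ⟨j, rfl⟩; exact hgen j)
    exact hle hv
  · -- shift part
    intro v hv hv0
    obtain ⟨a, ha⟩ := (Submodule.mem_span_range_iff_exists_fun ℚ).mp hv
    set A : ℕ → ℚ := fun n => if h : n < N then a ⟨n, h⟩ else 0 with hA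
    -- pointwise formula for v
    have hv' : ∀ (p : ℕ) (hp : p < N), v ⟨p, hp⟩
        = ∑ n ∈ Finset.range N, A n * (b (n + 1) (p + 1) : ℚ) := by
      intro p hp
      rw [← ha]
      rw [Finset.sum_apply]
      rw [← Fin.sum_univ_eq_sum_range (fun n => A n * (b (n + 1) (p + 1) : ℚ)) N]
      refine Finset.sum_congr rfl (fun j _ => ?_)
      rw [Pi.smul_apply, smul_eq_mul, hrows]
      simp [hA]
    have hNsplit : ∀ g : ℕ → ℚ, ∑ n ∈ Finset.range N, g n
        = ∑ n ∈ Finset.range (N - 1), g n + g (N - 1) := by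
      intro g
      conv_lhs => rw [show N = N - 1 + 1 by omega]
      exact Finset.sum_range_succ g (N - 1)
    have hbNN : b N N = 0 := by
      have := hskew N N (by omega) (by omega) (by omega) (by omega); omega
    have key0 : ∑ n ∈ Finset.range (N - 1), A n * (b 1 (n + 2) : ℚ) = 0 := by
      have h0 := hv' (N - 1) (by omega)
      rw [hv0, show N - 1 + 1 = N by omega, hNsplit] at h0
      rw [show N - 1 + 1 = N by omega, hbNN] at h0
      have hc : ∑ n ∈ Finset.range (N - 1), A n * ((b 1 (n + 2) : ℤ) : ℚ)
          = ∑ n ∈ Finset.range (N - 1), A n * ((b (n + 1) N : ℤ) : ℚ) := by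
        refine Finset.sum_congr rfl (fun n hn => ?_)
        have hn' := Finset.mem_range.mp hn
        rw [h1 (n + 1) (by omega) (by omega), show n + 1 + 1 = n + 2 by omega]
      rw [hc]
      push_cast at h0
      linarith [h0]
    set S3 : ℚ := ∑ n ∈ Finset.range (N - 1),
      A n * ((max (-(b 1 (n + 2))) 0 : ℤ) : ℚ) with hS3
    set lam : ℚ := A (N - 1) - S3 with hlam
    set w : Fin N → ℚ := (∑ n ∈ Finset.range (N - 1),
        A n • (fun i : Fin N => (b (n + 2) ((i : ℕ) + 1) : ℚ)))
        - lam • (fun i : Fin N => (b 1 ((i : ℕ) + 1) : ℚ)) with hw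
    have hwmem : w ∈ Submodule.span ℚ (Set.range rows) := by
      rw [hw]
      refine Submodule.sub_mem _ (Submodule.sum_mem _ (fun n hn => ?_))
        (Submodule.smul_mem _ _ (Submodule.subset_span ⟨⟨0, by omega⟩, ?_⟩))
      · have hn' := Finset.mem_range.mp hn
        refine Submodule.smul_mem _ _ (Submodule.subset_span ⟨⟨n + 1, by omega⟩, ?_⟩)
        funext i
        rw [hrows]
      · funext i
        rw [hrows]
    have hweq : (fun i : Fin N =>
        if 0 < (i : ℕ) then
          v ⟨(i : ℕ) - 1, Nat.lt_of_le_of_lt (Nat.sub_le _ _) i.isLt⟩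
        else 0) = w := by
      funext i
      have hib := i.isLt
      rw [hw]
      simp only [Pi.sub_apply, Finset.sum_apply, Pi.smul_apply, smul_eq_mul]
      rcases Nat.eq_zero_or_pos (i : ℕ) with hi0 | hip
      · rw [if_neg (by omega), hi0]
        have : ∀ n ∈ Finset.range (N - 1),
            A n * ((b (n + 2) (0 + 1) : ℤ) : ℚ) = - (A n * (b 1 (n + 2) : ℚ)) := by
          intro n hn
          have hn' := Finset.mem_range.mp hn
          rw [show (0 : ℕ) + 1 = 1 by omega,
            hskew (n + 2) 1 (by omega) (by omega) (by omega) (by omega)]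
          push_cast
          ring
        rw [Finset.sum_congr rfl this, Finset.sum_neg_distrib, key0]
        have hb11 : b 1 1 = 0 := by
          have := hskew 1 1 (by omega) (by omega) (by omega) (by omega); omega
        rw [show (0 : ℕ) + 1 = 1 by omega, hb11]
        norm_num
      · rw [if_pos hip]
        set p : ℕ := (i : ℕ) with hp
        -- expand b (n+2) (p+1) via h2
        have hexp : ∀ n ∈ Finset.range (N - 1),
            A n * ((b (n + 2) (p + 1) : ℤ) : ℚ)
            = A n * (b (n + 1) p : ℚ)
              + (A n * (b 1 (n + 2) : ℚ)) * ((max (-(b 1 (p + 1))) 0 : ℤ) : ℚ)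
              - (b 1 (p + 1) : ℚ) * (A n * ((max (-(b 1 (n + 2))) 0 : ℤ) : ℚ)) := by
          intro n hn
          have hn' := Finset.mem_range.mp hn
          have := h2 (n + 1) p (by omega) (by omega) (by omega) (by omega)
          rw [show n + 1 + 1 = n + 2 by omega] at this
          rw [this]
          push_cast
          ring
        rw [Finset.sum_congr rfl hexp, Finset.sum_sub_distrib,
          Finset.sum_add_distrib, ← Finset.sum_mul, ← Finset.mul_sum, key0]
        have hS1 : ∑ n ∈ Finset.range (N - 1), A n * (b (n + 1) p : ℚ)
            = v ⟨(i : ℕ) - 1, Nat.lt_of_le_of_lt (Nat.sub_le _ _) i.isLt⟩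
              + A (N - 1) * (b 1 (p + 1) : ℚ) := by
          have h0 := hv' ((i : ℕ) - 1) (Nat.lt_of_le_of_lt (Nat.sub_le _ _) i.isLt)
          rw [show (i : ℕ) - 1 + 1 = p by omega, hNsplit] at h0
          have hbNp : b (N - 1 + 1) p = - b 1 (p + 1) := by
            rw [show N - 1 + 1 = N by omega,
              hskew N p (by omega) (by omega) (by omega) (by omega),
              h1 p (by omega) (by omega)]
          rw [hbNp] at h0
          push_cast at h0
          rw [h0]
          ring
        rw [hS1, hlam, hS3]
        ring
    rw [hweq]
    exact hwmem
end

section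
/- Let N ≥ 2 and let a₁, …, a_{N−1} be integers forming a palindromic tuple, a_j = a_{N−j} for 1 ≤ j ≤ N−1. Let x : ℕ → ℝ be a sequence with x_n > 0 for all n satisfying the coefficient-free T-system x_{n+N} · x_n = ∏_{j=1}^{N−1} x_{n+j}^{[a_j]₊} + ∏_{j=1}^{N−1} x_{n+j}^{[−a_j]₊} for all n ∈ ℕ, where [b]₊ := max(b,0). Then the sequence ȳ_n := ∏_{j=1}^{N−1} x_{n+j}^{−a_j} satisfies the Y-system ȳ_{n+N} · ȳ_n = ∏_{j=1}^{N−1} (1 + ȳ_{n+j})^{[−a_j]₊} / ∏_{j=1}^{N−1} (1 + ȳ_{n+j}^{−1})^{[a_j]₊} for all n ∈ ℕ. -/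
private lemma zpow_mul_of_ne {x : ℝ} (hx : x ≠ 0) (m n : ℤ) : x ^ (m * n) = (x ^ m) ^ n := by
  calc x ^ (m * n) = ((Units.mk0 x hx ^ (m * n) : ℝˣ) : ℝ) := by
        rw [Units.val_zpow_eq_zpow_val, Units.val_mk0]
    _ = (((Units.mk0 x hx ^ m) ^ n : ℝˣ) : ℝ) := by rw [zpow_mul]
    _ = (x ^ m) ^ n := by
        rw [Units.val_zpow_eq_zpow_val, Units.val_zpow_eq_zpow_val, Units.val_mk0]

/-- For a period-1 quiver with palindromic exponent tuple `(a_1, …, a_{N-1})`, a positive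
solution of the coefficient-free T-system yields, via `ȳ_n = ∏_j x_{n+j}^{-a_j}`, a
solution of the associated Y-system. Here `[b]₊ = max b 0` and all powers are `zpow`. -/
theorem Tsystem_solves_Ysystem
    (N : ℕ) (hN : 2 ≤ N) (a : ℕ → ℤ)
    (hpal : ∀ j, 1 ≤ j → j ≤ N - 1 → a j = a (N - j))
    (x : ℕ → ℝ) (hx : ∀ n, 0 < x n)
    (hT : ∀ n : ℕ, x (n + N) * x n =
      (∏ j ∈ Finset.Icc 1 (N - 1), x (n + j) ^ (max (a j) 0)) +
      (∏ j ∈ Finset.Icc 1 (N - 1), x (n + j) ^ (max (-(a j)) 0)))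
    (y : ℕ → ℝ)
    (hy : ∀ n, y n = ∏ j ∈ Finset.Icc 1 (N - 1), x (n + j) ^ (-(a j))) :
    ∀ n : ℕ, y (n + N) * y n =
      (∏ j ∈ Finset.Icc 1 (N - 1), (1 + y (n + j)) ^ (max (-(a j)) 0)) /
      (∏ j ∈ Finset.Icc 1 (N - 1), (1 + (y (n + j))⁻¹) ^ (max (a j) 0)) := by
  set S := Finset.Icc 1 (N - 1) with hS
  -- positivity of the two basic products
  have hPpos : ∀ m, 0 < ∏ j ∈ S, x (m + j) ^ (max (a j) 0) :=
    fun m => Finset.prod_pos fun j _ => zpow_pos (hx _) _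
  have hQpos : ∀ m, 0 < ∏ j ∈ S, x (m + j) ^ (max (-(a j)) 0) :=
    fun m => Finset.prod_pos fun j _ => zpow_pos (hx _) _
  -- y as a quotient
  have hyQP : ∀ m, y m =
      (∏ j ∈ S, x (m + j) ^ (max (-(a j)) 0)) / (∏ j ∈ S, x (m + j) ^ (max (a j) 0)) := by
    intro m
    rw [hy m, ← Finset.prod_div_distrib]
    refine Finset.prod_congr rfl fun j _ => ?_
    rw [← zpow_sub₀ (hx (m + j)).ne']
    congr 1
    omega
  have hypos : ∀ m, 0 < y m := fun m => by
    rw [hyQP m]; exact div_pos (hQpos m) (hPpos m)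
  -- 1 + y and 1 + y⁻¹
  have h1 : ∀ m, 1 + y m = (x (m + N) * x m) / (∏ j ∈ S, x (m + j) ^ (max (a j) 0)) := by
    intro m
    rw [hyQP m, hT m, add_div, div_self (hPpos m).ne']
  have h2 : ∀ m, 1 + (y m)⁻¹ =
      (x (m + N) * x m) / (∏ j ∈ S, x (m + j) ^ (max (-(a j)) 0)) := by
    intro m
    rw [hyQP m, hT m, inv_div, add_div, div_self (hQpos m).ne', add_comm]
  intro n
  -- expand numerator and denominator of the RHS
  have hnum : ∏ j ∈ S, (1 + y (n + j)) ^ (max (-(a j)) 0) =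
      (∏ j ∈ S, (x (n + j + N) * x (n + j)) ^ (max (-(a j)) 0)) /
      (∏ j ∈ S, (∏ k ∈ S, x (n + j + k) ^ (max (a k) 0)) ^ (max (-(a j)) 0)) := by
    rw [← Finset.prod_div_distrib]
    exact Finset.prod_congr rfl fun j _ => by rw [h1 (n + j), div_zpow]
  have hden : ∏ j ∈ S, (1 + (y (n + j))⁻¹) ^ (max (a j) 0) =
      (∏ j ∈ S, (x (n + j + N) * x (n + j)) ^ (max (a j) 0)) /
      (∏ j ∈ S, (∏ k ∈ S, x (n + j + k) ^ (max (-(a k)) 0)) ^ (max (a j) 0)) := by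
    rw [← Finset.prod_div_distrib]
    exact Finset.prod_congr rfl fun j _ => by rw [h2 (n + j), div_zpow]
  -- the key exchange identity
  have key : ∏ j ∈ S, (∏ k ∈ S, x (n + j + k) ^ (max (-(a k)) 0)) ^ (max (a j) 0) =
      ∏ j ∈ S, (∏ k ∈ S, x (n + j + k) ^ (max (a k) 0)) ^ (max (-(a j)) 0) := by
    have expandL : ∀ j, (∏ k ∈ S, x (n + j + k) ^ (max (-(a k)) 0)) ^ (max (a j) 0) =
        ∏ k ∈ S, x (n + j + k) ^ (max (-(a k)) 0 * max (a j) 0) := by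
      intro j
      rw [← Finset.prod_zpow]
      exact Finset.prod_congr rfl fun k _ => (zpow_mul_of_ne (hx _).ne' _ _).symm
    have expandR : ∀ j, (∏ k ∈ S, x (n + j + k) ^ (max (a k) 0)) ^ (max (-(a j)) 0) =
        ∏ k ∈ S, x (n + j + k) ^ (max (a k) 0 * max (-(a j)) 0) := by
      intro j
      rw [← Finset.prod_zpow]
      exact Finset.prod_congr rfl fun k _ => (zpow_mul_of_ne (hx _).ne' _ _).symm
    rw [Finset.prod_congr rfl fun j _ => expandL j,
        Finset.prod_congr rfl fun j _ => expandR j, Finset.prod_comm]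
    refine Finset.prod_congr rfl fun j _ => Finset.prod_congr rfl fun k _ => ?_
    rw [show n + k + j = n + j + k by omega, mul_comm]
  -- positivity of the pieces
  have hApos : 0 < ∏ j ∈ S, (x (n + j + N) * x (n + j)) ^ (max (-(a j)) 0) :=
    Finset.prod_pos fun j _ => zpow_pos (mul_pos (hx _) (hx _)) _
  have hBpos : 0 < ∏ j ∈ S, (x (n + j + N) * x (n + j)) ^ (max (a j) 0) :=
    Finset.prod_pos fun j _ => zpow_pos (mul_pos (hx _) (hx _)) _
  have hKpos : 0 < ∏ j ∈ S, (∏ k ∈ S, x (n + j + k) ^ (max (a k) 0)) ^ (max (-(a j)) 0) :=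
    Finset.prod_pos fun j _ => zpow_pos (Finset.prod_pos fun k _ => zpow_pos (hx _) _) _
  rw [hnum, hden, key]
  rw [div_div_div_comm, div_self hKpos.ne', div_one]
  -- now both sides equal ∏ (x(n+j+N) x(n+j))^(-a j)
  have hLHS : y (n + N) * y n = ∏ j ∈ S, (x (n + j + N) * x (n + j)) ^ (-(a j)) := by
    rw [hy (n + N), hy n, ← Finset.prod_mul_distrib]
    refine Finset.prod_congr rfl fun j _ => ?_
    rw [mul_zpow, show n + N + j = n + j + N by omega]
  rw [hLHS, ← Finset.prod_div_distrib]
  refine Finset.prod_congr rfl fun j _ => ?_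
  rw [← zpow_sub₀ (mul_pos (hx (n + j + N)) (hx (n + j))).ne']
  congr 1
  omega
end

section
/- Let N ≥ 2 and let a₁, …, a_{N−1} be integers forming a palindromic tuple, a_j = a_{N−j} for 1 ≤ j ≤ N−1. Let x : ℕ → ℝ and 𝒵 : ℕ → ℝ be sequences with x_n > 0 and 𝒵_n > 0 for all n, satisfying the modified T-system x_{n+N} · x_n = 𝒵_n · ( ∏_{j=1}^{N−1} x_{n+j}^{[a_j]₊} + ∏_{j=1}^{N−1} x_{n+j}^{[−a_j]₊} ) for all n ∈ ℕ, where [b]₊ := max(b,0). Define ȳ_n := ∏_{j=1}^{N−1} x_{n+j}^{−a_j}. Then ȳ satisfies the Y-system ȳ_{n+N} · ȳ_n = ∏_{j=1}^{N−1} (1 + ȳ_{n+j})^{[−a_j]₊} / ∏_{j=1}^{N−1} (1 + ȳ_{n+j}^{−1})^{[a_j]₊} for all n ∈ ℕ if and only if 𝒵 satisfies the Z-system ∏_{j=1}^{N−1} 𝒵_{n+j}^{−a_j} = 1 for all n ∈ ℕ. -/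
/-- For a period-1 quiver with palindromic exponent tuple `(a_1, …, a_{N-1})` and positive
sequences `x`, `𝒵` satisfying the modified T-system, `ȳ_n = ∏_j x_{n+j}^{-a_j}` solves the
Y-system if and only if `𝒵` solves the Z-system `∏_j 𝒵_{n+j}^{-a_j} = 1`.
Here `[b]₊ = max b 0` and all powers are `zpow`. -/
theorem Tzsystem_solves_Ysystem_iff_Zsystem
    (N : ℕ) (hN : 2 ≤ N) (a : ℕ → ℤ)
    (hpal : ∀ j, 1 ≤ j → j ≤ N - 1 → a j = a (N - j))
    (x 𝒵 : ℕ → ℝ) (hx : ∀ n, 0 < x n) (h𝒵 : ∀ n, 0 < 𝒵 n)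
    (hT : ∀ n : ℕ, x (n + N) * x n = 𝒵 n *
      ((∏ j ∈ Finset.Icc 1 (N - 1), x (n + j) ^ (max (a j) 0)) +
       (∏ j ∈ Finset.Icc 1 (N - 1), x (n + j) ^ (max (-(a j)) 0))))
    (y : ℕ → ℝ)
    (hy : ∀ n, y n = ∏ j ∈ Finset.Icc 1 (N - 1), x (n + j) ^ (-(a j))) :
    (∀ n : ℕ, y (n + N) * y n =
      (∏ j ∈ Finset.Icc 1 (N - 1), (1 + y (n + j)) ^ (max (-(a j)) 0)) /
      (∏ j ∈ Finset.Icc 1 (N - 1), (1 + (y (n + j))⁻¹) ^ (max (a j) 0))) ↔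
    (∀ n : ℕ, (∏ j ∈ Finset.Icc 1 (N - 1), 𝒵 (n + j) ^ (-(a j))) = 1) := by
  set I := Finset.Icc 1 (N - 1) with hI
  -- P k = ∏ x^{[a]₊}, Q k = ∏ x^{[-a]₊}
  set P : ℕ → ℝ := fun k => ∏ j ∈ I, x (k + j) ^ (max (a j) 0) with hPdef
  set Q : ℕ → ℝ := fun k => ∏ j ∈ I, x (k + j) ^ (max (-(a j)) 0) with hQdef
  have hPpos : ∀ k, 0 < P k := fun k =>
    Finset.prod_pos fun j _ => zpow_pos (hx _) _
  have hQpos : ∀ k, 0 < Q k := fun k =>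
    Finset.prod_pos fun j _ => zpow_pos (hx _) _
  have hSpos : ∀ k, 0 < P k + Q k := fun k => add_pos (hPpos k) (hQpos k)
  -- y k = Q k / P k
  have hyQP : ∀ k, y k = Q k / P k := by
    intro k
    rw [hy k, hPdef, hQdef, ← Finset.prod_div_distrib]
    refine Finset.prod_congr rfl fun j _ => ?_
    rw [← zpow_sub₀ (hx (k + j)).ne']
    congr 1
    omega
  have h1y : ∀ k, 1 + y k = (P k + Q k) / P k := by
    intro k
    rw [hyQP k, eq_div_iff (hPpos k).ne', add_mul, div_mul_cancel₀ _ (hPpos k).ne', one_mul]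
  have h1yi : ∀ k, 1 + (y k)⁻¹ = (P k + Q k) / Q k := by
    intro k
    rw [hyQP k, inv_div, eq_div_iff (hQpos k).ne', add_mul, div_mul_cancel₀ _ (hQpos k).ne', one_mul, add_comm]
  -- key combinatorial identity (swap double product)
  have hK : ∀ n, ∏ j ∈ I, (P (n + j)) ^ (max (-(a j)) 0)
      = ∏ j ∈ I, (Q (n + j)) ^ (max (a j) 0) := by
    intro n
    have h1 : ∏ j ∈ I, (P (n + j)) ^ (max (-(a j)) 0)
        = ∏ j ∈ I, ∏ k ∈ I, x (n + j + k) ^ (max (a k) 0 * max (-(a j)) 0) := by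
      refine Finset.prod_congr rfl fun j _ => ?_
      rw [hPdef]
      rw [← Finset.prod_zpow]
      refine Finset.prod_congr rfl fun k _ => ?_
      rw [← zpow_mul]
    have h2 : ∏ j ∈ I, (Q (n + j)) ^ (max (a j) 0)
        = ∏ j ∈ I, ∏ k ∈ I, x (n + j + k) ^ (max (-(a k)) 0 * max (a j) 0) := by
      refine Finset.prod_congr rfl fun j _ => ?_
      rw [hQdef]
      rw [← Finset.prod_zpow]
      refine Finset.prod_congr rfl fun k _ => ?_
      rw [← zpow_mul]
    rw [h1, h2, Finset.prod_comm]
    refine Finset.prod_congr rfl fun j _ => Finset.prod_congr rfl fun k _ => ?_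
    rw [show n + k + j = n + j + k by omega, mul_comm]
  refine forall_congr' fun n => ?_
  -- LHS computation
  have hLHS : y (n + N) * y n
      = (∏ j ∈ I, 𝒵 (n + j) ^ (-(a j))) * ∏ j ∈ I, (P (n + j) + Q (n + j)) ^ (-(a j)) := by
    rw [hy (n + N), hy n, ← Finset.prod_mul_distrib, ← Finset.prod_mul_distrib]
    refine Finset.prod_congr rfl fun j _ => ?_
    rw [← mul_zpow, ← mul_zpow, show n + N + j = n + j + N by omega, hT (n + j)]
  -- RHS computation
  have hRHS : (∏ j ∈ I, (1 + y (n + j)) ^ (max (-(a j)) 0)) /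
      (∏ j ∈ I, (1 + (y (n + j))⁻¹) ^ (max (a j) 0))
      = ∏ j ∈ I, (P (n + j) + Q (n + j)) ^ (-(a j)) := by
    have e1 : ∏ j ∈ I, (1 + y (n + j)) ^ (max (-(a j)) 0)
        = (∏ j ∈ I, (P (n + j) + Q (n + j)) ^ (max (-(a j)) 0)) /
          (∏ j ∈ I, (P (n + j)) ^ (max (-(a j)) 0)) := by
      rw [← Finset.prod_div_distrib]
      exact Finset.prod_congr rfl fun j _ => by rw [h1y (n + j), div_zpow]
    have e2 : ∏ j ∈ I, (1 + (y (n + j))⁻¹) ^ (max (a j) 0)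
        = (∏ j ∈ I, (P (n + j) + Q (n + j)) ^ (max (a j) 0)) /
          (∏ j ∈ I, (Q (n + j)) ^ (max (a j) 0)) := by
      rw [← Finset.prod_div_distrib]
      exact Finset.prod_congr rfl fun j _ => by rw [h1yi (n + j), div_zpow]
    rw [e1, e2, hK n, div_div_div_comm, div_self
      (Finset.prod_pos (fun j _ => zpow_pos (hQpos (n + j)) _)).ne', div_one,
      ← Finset.prod_div_distrib]
    refine Finset.prod_congr rfl fun j _ => ?_
    rw [← zpow_sub₀ (hSpos (n + j)).ne']
    congr 1
    omega
  rw [hLHS, hRHS]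
  have hW : (∏ j ∈ I, (P (n + j) + Q (n + j)) ^ (-(a j))) ≠ 0 :=
    (Finset.prod_pos fun j _ => zpow_pos (hSpos (n + j)) _).ne'
  constructor
  · intro h
    exact mul_right_cancel₀ hW (by rw [h, one_mul])
  · intro h
    rw [h, one_mul]
end

section
/- Let N ≥ 4 and let 𝒵 : ℕ → ℝ be a sequence with 𝒵_n > 0 for all n. Then 𝒵 satisfies the Z-system 𝒵_{n+N−2} · 𝒵_n = 𝒵_{n+N−3} · 𝒵_{n+1} for all n ∈ ℕ if and only if there exist a constant 𝔮 > 0 and a sequence β : ℕ → ℝ with β_n > 0 and β_{n+N−3} = β_n for all n, such that 𝒵_n = β_n · 𝔮^n for all n ∈ ℕ. -/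
/-- A positive sequence `𝒵` satisfies the Z-system
`𝒵_{n+N-2} 𝒵_n = 𝒵_{n+N-3} 𝒵_{n+1}` if and only if `𝒵_n = β_n 𝔮^n` for some constant
`𝔮 > 0` and some positive sequence `β` that is periodic with period `N - 3`. -/
theorem Zsystem_solution_characterization
    (N : ℕ) (hN : 4 ≤ N) (𝒵 : ℕ → ℝ) (h𝒵 : ∀ n, 0 < 𝒵 n) :
    (∀ n : ℕ, 𝒵 (n + (N - 2)) * 𝒵 n = 𝒵 (n + (N - 3)) * 𝒵 (n + 1)) ↔
    (∃ 𝔮 : ℝ, 0 < 𝔮 ∧ ∃ β : ℕ → ℝ, (∀ n, 0 < β n) ∧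
      (∀ n : ℕ, β (n + (N - 3)) = β n) ∧ (∀ n : ℕ, 𝒵 n = β n * 𝔮 ^ n)) := by
  set k := N - 3 with hk
  have hk1 : 1 ≤ k := by omega
  have hN2 : N - 2 = k + 1 := by omega
  constructor
  · intro h
    have h' : ∀ n, 𝒵 (n + k + 1) * 𝒵 n = 𝒵 (n + k) * 𝒵 (n + 1) := by
      intro n
      have := h n
      rw [hN2] at this
      rw [show n + k + 1 = n + (k + 1) by ring]
      exact this
    -- key: 𝒵 (n + k) * 𝒵 0 = 𝒵 k * 𝒵 n
    have key : ∀ n, 𝒵 (n + k) * 𝒵 0 = 𝒵 k * 𝒵 n := by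
      intro n
      induction n with
      | zero => rw [Nat.zero_add]
      | succ n ih =>
        have h1 := h' n
        have hn := (h𝒵 n).ne'
        rw [show n + 1 + k = n + k + 1 by ring]
        apply mul_right_cancel₀ hn
        calc 𝒵 (n + k + 1) * 𝒵 0 * 𝒵 n = 𝒵 (n + k + 1) * 𝒵 n * 𝒵 0 := by ring
          _ = 𝒵 (n + k) * 𝒵 (n + 1) * 𝒵 0 := by rw [h1]
          _ = 𝒵 (n + k) * 𝒵 0 * 𝒵 (n + 1) := by ring
          _ = 𝒵 k * 𝒵 n * 𝒵 (n + 1) := by rw [ih]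
          _ = 𝒵 k * 𝒵 (n + 1) * 𝒵 n := by ring
    have hP : 0 < 𝒵 k / 𝒵 0 := div_pos (h𝒵 k) (h𝒵 0)
    set P : ℝ := 𝒵 k / 𝒵 0 with hPdef
    refine ⟨P ^ ((k : ℝ)⁻¹), Real.rpow_pos_of_pos hP _, fun n => 𝒵 n / (P ^ ((k:ℝ)⁻¹)) ^ n,
      fun n => div_pos (h𝒵 n) (pow_pos (Real.rpow_pos_of_pos hP _) n), ?_, ?_⟩
    · intro n
      have hqk : (P ^ ((k:ℝ)⁻¹)) ^ k = P := by
        rw [← Real.rpow_natCast (P ^ ((k:ℝ)⁻¹)) k, ← Real.rpow_mul hP.le]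
        rw [inv_mul_cancel₀ (Nat.cast_ne_zero.mpr (by omega) : (k:ℝ) ≠ 0)]
        exact Real.rpow_one P
      have hzk : 𝒵 (n + k) = P * 𝒵 n := by
        have h0 := (h𝒵 0).ne'
        rw [hPdef]
        field_simp
        linarith [key n]
      show 𝒵 (n + k) / (P ^ ((k:ℝ)⁻¹)) ^ (n + k) = 𝒵 n / (P ^ ((k:ℝ)⁻¹)) ^ n
      rw [hzk, pow_add, hqk]
      have hq := (Real.rpow_pos_of_pos hP ((k:ℝ)⁻¹))
      field_simp
    · intro n
      have hq := (Real.rpow_pos_of_pos hP ((k:ℝ)⁻¹))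
      show 𝒵 n = 𝒵 n / (P ^ ((k:ℝ)⁻¹)) ^ n * (P ^ ((k:ℝ)⁻¹)) ^ n
      rw [div_mul_cancel₀ _ (pow_pos hq n).ne']
  · rintro ⟨𝔮, h𝔮, β, hβpos, hβper, hβeq⟩ n
    rw [hN2, hβeq, hβeq, hβeq, hβeq]
    have e1 : β (n + (k + 1)) = β (n + 1) := by
      rw [show n + (k + 1) = (n + 1) + k by ring]
      exact hβper (n + 1)
    rw [e1, hβper n]
    ring
end

section
/- Let x : ℕ → ℝ and 𝒵 : ℕ → ℝ be sequences with x_n > 0 and 𝒵_n > 0 for all n, satisfying the Somos-5 T_z-system x_{n+5} · x_n = 𝒵_n · (x_{n+4} · x_{n+1} + x_{n+3} · x_{n+2}) for all n ∈ ℕ. Then the quantities U_n := x_{n+3} · x_n / (x_{n+2} · x_{n+1}) satisfy the U_z-system U_{n+2} · U_n = 𝒵_n · (1 + U_{n+1}^{−1}) for all n ∈ ℕ (a version of q-Painlevé II when 𝒵_n = β_n 𝔮^n with β of period 2). -/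
/-- For positive solutions of the Somos-5 T_z-system
`x_{n+5} x_n = 𝒵_n (x_{n+4} x_{n+1} + x_{n+3} x_{n+2})`, the quantities
`U_n = x_{n+3} x_n/(x_{n+2} x_{n+1})` satisfy the U_z-system
`U_{n+2} U_n = 𝒵_n (1 + U_{n+1}⁻¹)` (a version of q-Painlevé II). -/
theorem somos5_Tz_to_Uz
    (x 𝒵 : ℕ → ℝ) (hx : ∀ n, 0 < x n) (h𝒵 : ∀ n, 0 < 𝒵 n)
    (hT : ∀ n : ℕ, x (n + 5) * x n = 𝒵 n * (x (n + 4) * x (n + 1) + x (n + 3) * x (n + 2)))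
    (U : ℕ → ℝ) (hU : ∀ n, U n = x (n + 3) * x n / (x (n + 2) * x (n + 1))) :
    ∀ n : ℕ, U (n + 2) * U n = 𝒵 n * (1 + (U (n + 1))⁻¹) := by
  intro n
  have h0 := (hx n).ne'
  have h1 := (hx (n+1)).ne'
  have h2 := (hx (n+2)).ne'
  have h3 := (hx (n+3)).ne'
  have h4 := (hx (n+4)).ne'
  have h5 := (hx (n+5)).ne'
  have hTn := hT n
  rw [hU, hU, hU]
  show x (n + 2 + 3) * x (n + 2) / (x (n + 2 + 2) * x (n + 2 + 1)) *
      (x (n + 3) * x n / (x (n + 2) * x (n + 1))) =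
    𝒵 n * (1 + (x (n + 1 + 3) * x (n + 1) / (x (n + 1 + 2) * x (n + 1 + 1)))⁻¹)
  have e1 : n + 2 + 3 = n + 5 := by ring
  have e2 : n + 2 + 2 = n + 4 := by ring
  have e3 : n + 2 + 1 = n + 3 := by ring
  have e4 : n + 1 + 3 = n + 4 := by ring
  have e5 : n + 1 + 2 = n + 3 := by ring
  have e6 : n + 1 + 1 = n + 2 := by ring
  rw [e1, e2, e3, e4, e5, e6]
  field_simp
  linear_combination hTn
end

section
/- Let N ≥ 4 be even, and let x : ℕ → ℝ and 𝒵 : ℕ → ℝ be sequences with x_n > 0 and 𝒵_n > 0 for all n, satisfying x_{n+N} · x_n = 𝒵_n · (x_{n+N−1} · x_{n+1} + x_{n+N−2} · x_{n+2}) for all n ∈ ℕ. Then the quantities U_n := x_n · x_{n+2} / x_{n+1}^2 satisfy the U_z-system U_{n+N−2} · ( ∏_{j=1}^{N−3} U_{n+j} )² · U_n = 𝒵_n · ( 1 + ∏_{k=1}^{N−3} U_{n+k} ) for all n ∈ ℕ. -/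
lemma somos_prodU (x : ℕ → ℝ) (hx : ∀ n, 0 < x n) (U : ℕ → ℝ)
    (hU : ∀ n, U n = x n * x (n + 2) / (x (n + 1)) ^ 2) (n : ℕ) :
    ∀ t : ℕ, ∏ j ∈ Finset.Icc 1 (t + 1), U (n + j) =
      x (n + 1) * x (n + t + 3) / (x (n + 2) * x (n + t + 2)) := by
  intro t
  induction t with
  | zero =>
      rw [Finset.Icc_self, Finset.prod_singleton, hU (n + 1)]
      show x (n + 1) * x (n + 3) / x (n + 2) ^ 2 =
        x (n + 1) * x (n + 3) / (x (n + 2) * x (n + 2))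
      rw [sq]
  | succ t ih =>
      rw [show t + 1 + 1 = (t + 1) + 1 from rfl,
        Finset.prod_Icc_succ_top (by omega : 1 ≤ t + 1 + 1), ih, hU]
      show x (n + 1) * x (n + t + 3) / (x (n + 2) * x (n + t + 2)) *
          (x (n + t + 2) * x (n + t + 4) / x (n + t + 3) ^ 2) =
        x (n + 1) * x (n + t + 4) / (x (n + 2) * x (n + t + 3))
      have h2 := (hx (n + 2)).ne'
      have h3 := (hx (n + t + 2)).ne'
      have h4 := (hx (n + t + 3)).ne'
      field_simp

/-- For even `N ≥ 4` and positive solutions of the Somos-type T_z-system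
`x_{n+N} x_n = 𝒵_n (x_{n+N-1} x_{n+1} + x_{n+N-2} x_{n+2})`, the quantities
`U_n = x_n x_{n+2}/x_{n+1}²` satisfy the U_z-system
`U_{n+N-2} (∏_{j=1}^{N-3} U_{n+j})² U_n = 𝒵_n (1 + ∏_{k=1}^{N-3} U_{n+k})`. -/
theorem somosN_even_Tz_to_Uz
    (N : ℕ) (hN : 4 ≤ N) (hNeven : Even N)
    (x 𝒵 : ℕ → ℝ) (hx : ∀ n, 0 < x n) (h𝒵 : ∀ n, 0 < 𝒵 n)
    (hT : ∀ n : ℕ, x (n + N) * x n =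
      𝒵 n * (x (n + (N - 1)) * x (n + 1) + x (n + (N - 2)) * x (n + 2)))
    (U : ℕ → ℝ) (hU : ∀ n, U n = x n * x (n + 2) / (x (n + 1)) ^ 2) :
    ∀ n : ℕ, U (n + (N - 2)) * (∏ j ∈ Finset.Icc 1 (N - 3), U (n + j)) ^ 2 * U n =
      𝒵 n * (1 + ∏ k ∈ Finset.Icc 1 (N - 3), U (n + k)) := by
  intro n
  obtain ⟨M, rfl⟩ : ∃ M, N = M + 4 := ⟨N - 4, by omega⟩
  have h3 : M + 4 - 3 = M + 1 := by omega
  have h2 : M + 4 - 2 = M + 2 := by omega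
  have h1 : M + 4 - 1 = M + 3 := by omega
  have hP := somos_prodU x hx U hU n M
  have hT' : x (n + M + 4) * x n =
      𝒵 n * (x (n + M + 3) * x (n + 1) + x (n + M + 2) * x (n + 2)) := by
    have := hT n
    rw [h1, h2] at this
    exact this
  rw [h3, h2, hP, hU (n + (M + 2)), hU n]
  show x (n + M + 2) * x (n + M + 4) / x (n + M + 3) ^ 2 *
      (x (n + 1) * x (n + M + 3) / (x (n + 2) * x (n + M + 2))) ^ 2 *
      (x n * x (n + 2) / x (n + 1) ^ 2) =
    𝒵 n * (1 + x (n + 1) * x (n + M + 3) / (x (n + 2) * x (n + M + 2)))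
  have a0 := (hx n).ne'
  have a1 := (hx (n + 1)).ne'
  have a2 := (hx (n + 2)).ne'
  have a3 := (hx (n + M + 2)).ne'
  have a4 := (hx (n + M + 3)).ne'
  field_simp
  linear_combination hT'
end

section
/- Let N ≥ 5 be odd, and let x : ℕ → ℝ and 𝒵 : ℕ → ℝ be sequences with x_n > 0 and 𝒵_n > 0 for all n, satisfying x_{n+N} · x_n = 𝒵_n · (x_{n+N−1} · x_{n+1} + x_{n+N−2} · x_{n+2}) for all n ∈ ℕ. Then the quantities U_n := x_n · x_{n+3} / (x_{n+1} · x_{n+2}) satisfy the U_z-system ∏_{j=0}^{N−3} U_{n+j} = 𝒵_n · ( 1 + ∏_{k=0}^{(N−5)/2} U_{n+2k+1} ) for all n ∈ ℕ. -/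
/-- For odd `N ≥ 5` and positive solutions of the Somos-type T_z-system
`x_{n+N} x_n = 𝒵_n (x_{n+N-1} x_{n+1} + x_{n+N-2} x_{n+2})`, the quantities
`U_n = x_n x_{n+3}/(x_{n+1} x_{n+2})` satisfy the U_z-system
`∏_{j=0}^{N-3} U_{n+j} = 𝒵_n (1 + ∏_{k=0}^{(N-5)/2} U_{n+2k+1})`. -/
theorem somosN_odd_Tz_to_Uz
    (N : ℕ) (hN : 5 ≤ N) (hNodd : Odd N)
    (x 𝒵 : ℕ → ℝ) (hx : ∀ n, 0 < x n) (h𝒵 : ∀ n, 0 < 𝒵 n)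
    (hT : ∀ n : ℕ, x (n + N) * x n =
      𝒵 n * (x (n + (N - 1)) * x (n + 1) + x (n + (N - 2)) * x (n + 2)))
    (U : ℕ → ℝ) (hU : ∀ n, U n = x n * x (n + 3) / (x (n + 1) * x (n + 2))) :
    ∀ n : ℕ, (∏ j ∈ Finset.range (N - 2), U (n + j)) =
      𝒵 n * (1 + ∏ k ∈ Finset.range ((N - 5) / 2 + 1), U (n + 2 * k + 1)) := by
  have hxne : ∀ n, x n ≠ 0 := fun n => (hx n).ne'
  -- Telescoping product 1
  have P1 : ∀ n M : ℕ, (∏ j ∈ Finset.range M, U (n + j)) =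
      x n * x (n + M + 2) / (x (n + 2) * x (n + M)) := by
    intro n M
    induction M with
    | zero =>
      simp only [Finset.range_zero, Finset.prod_empty, Nat.add_zero]
      rw [mul_comm (x n)]
      exact (div_self (mul_ne_zero (hxne _) (hxne _))).symm
    | succ M ih =>
      rw [Finset.prod_range_succ, ih, hU,
        show n + (M + 1) + 2 = n + M + 3 from by ring,
        show n + (M + 1) = n + M + 1 from by ring,
        show n + M + 1 + 2 = n + M + 3 from by ring,
        show n + M + 1 + 1 = n + M + 2 from by ring,
        show n + M + 2 + 1 = n + M + 3 from by ring]
      have h1 := hxne (n + 2); have h2 := hxne (n + M)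
      have h3 := hxne (n + M + 1); have h4 := hxne (n + M + 2)
      field_simp
  -- Telescoping product 2 (odd-index steps)
  have P2 : ∀ n K : ℕ, (∏ k ∈ Finset.range K, U (n + 2 * k + 1)) =
      x (n + 1) * x (n + 2 * K + 2) / (x (n + 2) * x (n + 2 * K + 1)) := by
    intro n K
    induction K with
    | zero =>
      simp only [Finset.range_zero, Finset.prod_empty, Nat.mul_zero, Nat.add_zero]
      rw [mul_comm (x (n + 1))]
      exact (div_self (mul_ne_zero (hxne _) (hxne _))).symm
    | succ K ih =>
      rw [Finset.prod_range_succ, ih, hU,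
        show n + 2 * (K + 1) + 2 = n + 2 * K + 4 from by ring,
        show n + 2 * (K + 1) + 1 = n + 2 * K + 3 from by ring,
        show n + 2 * K + 1 + 3 = n + 2 * K + 4 from by ring,
        show n + 2 * K + 1 + 1 = n + 2 * K + 2 from by ring,
        show n + 2 * K + 1 + 2 = n + 2 * K + 3 from by ring]
      have h1 := hxne (n + 2); have h2 := hxne (n + 2 * K + 1)
      have h3 := hxne (n + 2 * K + 2); have h4 := hxne (n + 2 * K + 3)
      field_simp
  obtain ⟨m, hm⟩ : ∃ m, N = 2 * m + 5 := by
    obtain ⟨k, hk⟩ := hNodd; exact ⟨k - 2, by omega⟩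
  subst hm
  intro n
  have hT' := hT n
  rw [show 2 * m + 5 - 2 = 2 * m + 3 from by omega,
    show (2 * m + 5 - 5) / 2 + 1 = m + 1 from by omega,
    P1, P2]
  rw [show 2 * m + 5 - 1 = 2 * m + 4 from by omega,
    show 2 * m + 5 - 2 = 2 * m + 3 from by omega] at hT'
  rw [show n + (2 * m + 3) + 2 = n + (2 * m + 5) from by ring,
    show n + 2 * (m + 1) + 2 = n + (2 * m + 4) from by ring,
    show n + 2 * (m + 1) + 1 = n + (2 * m + 3) from by ring]
  have h1 := hxne (n + 2)
  have h2 := hxne (n + (2 * m + 3))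
  have h3 := hxne (n + 1)
  field_simp
  nlinarith [hT', hxne n, hxne (n + (2*m+5))]
end

section
/- Let x : ℕ → ℝ and 𝒵 : ℕ → ℝ be sequences with x_n > 0 and 𝒵_n > 0 for all n, satisfying the special Somos-7 T_z-system x_{n+7} · x_n = 𝒵_n · (x_{n+6} · x_{n+1} + x_{n+4} · x_{n+3}) for all n ∈ ℕ. Then the quantities U_n := x_{n+5} · x_n / (x_{n+3} · x_{n+2}) satisfy the Lyness-type U_z-system U_{n+2} · U_n = 𝒵_n · (U_{n+1} + 1) for all n ∈ ℕ. -/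
/-- For positive solutions of the special Somos-7 T_z-system
`x_{n+7} x_n = 𝒵_n (x_{n+6} x_{n+1} + x_{n+4} x_{n+3})`, the quantities
`U_n = x_{n+5} x_n/(x_{n+3} x_{n+2})` satisfy the Lyness-type U_z-system
`U_{n+2} U_n = 𝒵_n (U_{n+1} + 1)`. -/
theorem somos7_Tz_to_Uz
    (x 𝒵 : ℕ → ℝ) (hx : ∀ n, 0 < x n) (h𝒵 : ∀ n, 0 < 𝒵 n)
    (hT : ∀ n : ℕ, x (n + 7) * x n = 𝒵 n * (x (n + 6) * x (n + 1) + x (n + 4) * x (n + 3)))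
    (U : ℕ → ℝ) (hU : ∀ n, U n = x (n + 5) * x n / (x (n + 3) * x (n + 2))) :
    ∀ n : ℕ, U (n + 2) * U n = 𝒵 n * (U (n + 1) + 1) := by
  intro n
  have hT := hT n
  have h2 := (hx (n+2)).ne'
  have h3 := (hx (n+3)).ne'
  have h4 := (hx (n+4)).ne'
  have h5 := (hx (n+5)).ne'
  rw [hU, hU, hU]
  show x (n + 2 + 5) * x (n + 2) / (x (n + 2 + 3) * x (n + 2 + 2)) *
      (x (n + 5) * x n / (x (n + 3) * x (n + 2))) =
    𝒵 n * (x (n + 1 + 5) * x (n + 1) / (x (n + 1 + 3) * x (n + 1 + 2)) + 1)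
  have e1 : n + 2 + 5 = n + 7 := by ring
  have e2 : n + 2 + 3 = n + 5 := by ring
  have e3 : n + 2 + 2 = n + 4 := by ring
  have e4 : n + 1 + 5 = n + 6 := by ring
  have e5 : n + 1 + 3 = n + 4 := by ring
  have e6 : n + 1 + 2 = n + 3 := by ring
  rw [e1, e2, e3, e4, e5, e6]
  field_simp
  linear_combination hT
end

section
/- Let x : ℕ → ℝ and 𝒵 : ℕ → ℝ be sequences with x_n > 0 and 𝒵_n > 0 for all n, satisfying the sixth-order T_z-system x_{n+6} · x_n = 𝒵_n · ( x_{n+5}² · x_{n+3}⁴ · x_{n+1}² + (x_{n+4} · x_{n+2})⁶ ) for all n ∈ ℕ. Then the quantities U_n := x_n · x_{n+2}² · x_{n+4} / (x_{n+1}³ · x_{n+3}³) satisfy the U_z-system U_{n+2} · U_n = 𝒵_n · ( U_{n+1}^{−1} + U_{n+1}^{−3} ) for all n ∈ ℕ. -/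
/-- For positive solutions of the sixth-order (nonintegrable) T_z-system
`x_{n+6} x_n = 𝒵_n (x_{n+5}² x_{n+3}⁴ x_{n+1}² + (x_{n+4} x_{n+2})⁶)`, the quantities
`U_n = x_n x_{n+2}² x_{n+4}/(x_{n+1}³ x_{n+3}³)` satisfy the U_z-system
`U_{n+2} U_n = 𝒵_n (U_{n+1}⁻¹ + U_{n+1}⁻³)`. -/
theorem sixthOrder_Tz_to_Uz
    (x 𝒵 : ℕ → ℝ) (hx : ∀ n, 0 < x n) (h𝒵 : ∀ n, 0 < 𝒵 n)
    (hT : ∀ n : ℕ, x (n + 6) * x n = 𝒵 n *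
      ((x (n + 5)) ^ 2 * (x (n + 3)) ^ 4 * (x (n + 1)) ^ 2 + (x (n + 4) * x (n + 2)) ^ 6))
    (U : ℕ → ℝ)
    (hU : ∀ n, U n = x n * (x (n + 2)) ^ 2 * x (n + 4) / ((x (n + 1)) ^ 3 * (x (n + 3)) ^ 3)) :
    ∀ n : ℕ, U (n + 2) * U n = 𝒵 n * ((U (n + 1))⁻¹ + ((U (n + 1))⁻¹) ^ 3) := by
  intro n
  have key := hT n
  have h0 := (hx n).ne'
  have h1 := (hx (n + 1)).ne'
  have h2 := (hx (n + 2)).ne'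
  have h3 := (hx (n + 3)).ne'
  have h4 := (hx (n + 4)).ne'
  have h5 := (hx (n + 5)).ne'
  have h6 := (hx (n + 6)).ne'
  rw [hU n, hU (n + 1), hU (n + 2)]
  have e1 : n + 1 + 1 = n + 2 := by ring
  have e2 : n + 1 + 2 = n + 3 := by ring
  have e3 : n + 1 + 3 = n + 4 := by ring
  have e4 : n + 1 + 4 = n + 5 := by ring
  have e5 : n + 2 + 1 = n + 3 := by ring
  have e6 : n + 2 + 2 = n + 4 := by ring
  have e7 : n + 2 + 3 = n + 5 := by ring
  have e8 : n + 2 + 4 = n + 6 := by ring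
  rw [e1, e2, e3, e4, e5, e6, e7, e8]
  field_simp
  linear_combination key
end
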